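/- In the instance D(G,≻,ε): if x is a symmetric core-stable data exchange, then the assignment f(e) := ((1−ε)/(1+ε))·max(f⁺(e), f⁻(e)) is a fractional matching of G (i.e., f(e) ∈ [0,1] for every hyperedge e and Σ_{e∈E(v)} f(e) ≤ 1 for every vertex v) and f is (1 − 10·ε^{1/4})-stable. -/
import Mathlib


open scoped BigOperators
open Classical

namespace DataExchangeHGM

noncomputable section

/-- A data exchange on an arbitrary agent type: entries in `[0,1]`, zero diagonal. -/
def IsExch {A : Type*} (x : A → A → ℝ) : Prop :=
  (∀ a b, 0 ≤ x a b ∧ x a b ≤ 1) ∧ ∀ a, x a a = 0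

/-- An exchange over the coalition `U`: zero outside `U × U`. -/
def IsExchOver {A : Type*} (U : Set A) (x : A → A → ℝ) : Prop :=
  IsExch x ∧ ∀ a b, (a ∉ U ∨ b ∉ U) → x a b = 0

/-- Core stability with respect to a utility function `u` (taking the whole exchange). -/
def CoreStable {A : Type*} (u : (A → A → ℝ) → A → ℝ) (x : A → A → ℝ) : Prop :=
  ¬ ∃ (U : Set A) (y : A → A → ℝ), U.Nonempty ∧ IsExchOver U y ∧ ∀ a ∈ U, u x a < u y a

variable {V E : Type*}

/-- The agents of the instance `D(G,≻,ε)`: one edge agent and one intermediate agent per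
hyperedge, and one vertex agent per vertex. -/
abbrev Agent (V E : Type*) := E ⊕ (E ⊕ V)

/-- The edge agent of hyperedge `e`. -/
def edgeA (e : E) : Agent V E := Sum.inl e

/-- The intermediate agent `i_e` of hyperedge `e`. -/
def interA (e : E) : Agent V E := Sum.inr (Sum.inl e)

/-- The vertex agent of vertex `v`. -/
def vertA (v : V) : Agent V E := Sum.inr (Sum.inr v)

variable [Fintype E]

/-- `E(v)`: the hyperedges containing `v`, where `ends e : Fin 3 → V` lists the three
vertices of `e`. -/
def Ev (ends : E → Fin 3 → V) (v : V) : Finset E :=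
  Finset.univ.filter (fun e => ∃ t, ends e t = v)

/-- The weight `w_v(e)`: `d+H+1`, `d+H`, or `H` according to the rank (0 = most preferred,
1 = second, 2 = least) of `e` in `v`'s preference order. -/
def weight (d H : ℝ) (rank : V → E → Fin 3) (v : V) (e : E) : ℝ :=
  if rank v e = 0 then d + H + 1 else if rank v e = 1 then d + H else H

/-- Utility of the edge agent `e`: payoff `x_{i_e,e}` minus cost `(1-ε)·x_{e,i_e}`. -/
def uEdge (ε : ℝ) (x : Agent V E → Agent V E → ℝ) (e : E) : ℝ :=
  x (interA e) (edgeA e) - (1 - ε) * x (edgeA e) (interA e)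

/-- Utility of the intermediate agent `i_e`. -/
def uInter (ε : ℝ) (ends : E → Fin 3 → V) (x : Agent V E → Agent V E → ℝ) (e : E) : ℝ :=
  min (x (edgeA e) (interA e))
      (min (x (vertA (ends e 0)) (interA e))
        (min (x (vertA (ends e 1)) (interA e)) (x (vertA (ends e 2)) (interA e))))
    - (1 - ε) *
      max (x (interA e) (edgeA e))
        (max (x (interA e) (vertA (ends e 0)))
          (max (x (interA e) (vertA (ends e 1))) (x (interA e) (vertA (ends e 2)))))

/-- Utility of the vertex agent `v`. -/
def uVert (d H Γ : ℝ) (ends : E → Fin 3 → V) (rank : V → E → Fin 3)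
    (x : Agent V E → Agent V E → ℝ) (v : V) : ℝ :=
  (∑ e ∈ Ev ends v, weight d H rank v e * x (interA e) (vertA v))
    - Γ * max ((∑ e ∈ Ev ends v, x (vertA v) (interA e)) - 1) 0

/-- The utility function of the instance `D(G,≻,ε)`. -/
def util (ε d H Γ : ℝ) (ends : E → Fin 3 → V) (rank : V → E → Fin 3)
    (x : Agent V E → Agent V E → ℝ) : Agent V E → ℝ
  | Sum.inl e => uEdge ε x e
  | Sum.inr (Sum.inl e) => uInter ε ends x e
  | Sum.inr (Sum.inr v) => uVert d H Γ ends rank x v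

/-- A symmetric exchange: for every hyperedge `e`, all shares from `i_e` to the edge agent
and the three vertex agents agree (their common value is `f⁻(e)`), and all shares towards
`i_e` agree (their common value is `f⁺(e)`). -/
def Symm (ends : E → Fin 3 → V) (x : Agent V E → Agent V E → ℝ) : Prop :=
  ∀ e : E, (∀ t : Fin 3, x (interA e) (vertA (ends e t)) = x (interA e) (edgeA e)) ∧
    (∀ t : Fin 3, x (vertA (ends e t)) (interA e) = x (edgeA e) (interA e))

/-- `f⁻(e)`: the common outgoing share of `i_e` in a symmetric exchange. -/
def fminus (x : Agent V E → Agent V E → ℝ) (e : E) : ℝ := x (interA e) (edgeA e)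

/-- `f⁺(e)`: the common incoming share of `i_e` in a symmetric exchange. -/
def fplus (x : Agent V E → Agent V E → ℝ) (e : E) : ℝ := x (edgeA e) (interA e)

private lemma num0 (q d H : ℝ) (h0 : 0 < q) (h1 : q < 1/10) (hd : d*q = 1) (hH : H*q^2 = 1) :
    (d+H)*(1+q^4) + ((d+H+1) - (d+H))*((1+q^4)*(1-10*q)) ≤ (1-q^4)*((d+H+1)*(1-q^3)) := by
  rw [← sub_nonneg]
  have key : ((1-q^4)*((d+H+1)*(1-q^3)) - ((d+H)*(1+q^4) + ((d+H+1) - (d+H))*((1+q^4)*(1-10*q)))) * q^2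
      = 9*q^3 - 3*q^4 - 3*q^5 - 2*q^6 + 11*q^7 + q^8 + q^9 := by
    linear_combination (-q^4 - 2*q^5 + q^8) * hd + (-q^3 - 2*q^4 + q^7) * hH
  have hpoly : 0 ≤ 9*q^3 - 3*q^4 - 3*q^5 - 2*q^6 + 11*q^7 + q^8 + q^9 := by
    nlinarith [pow_pos h0 3, pow_pos h0 4, pow_pos h0 5, pow_pos h0 6, pow_pos h0 7,
      pow_pos h0 8, pow_pos h0 9]
  nlinarith [key, hpoly, pow_pos h0 2]

private lemma num1 (q d H : ℝ) (h0 : 0 < q) (h1 : q < 1/10) (hd : d*q = 1) (hH : H*q^2 = 1) :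
    H*(1+q^4) + ((d+H+1) - H)*((1+q^4)*(1-10*q)) ≤ (1-q^4)*((d+H)*(1-q^3)) := by
  rw [← sub_nonneg]
  have key : ((1-q^4)*((d+H)*(1-q^3)) - (H*(1+q^4) + ((d+H+1) - H)*((1+q^4)*(1-10*q)))) * q^2
      = 9*q^2 + 9*q^3 - 3*q^4 - 2*q^5 + 9*q^6 + 11*q^7 + q^8 := by
    linear_combination (10*q^2 - q^4 - 2*q^5 + 10*q^6 + q^8) * hd + (-q^3 - 2*q^4 + q^7) * hH
  have hpoly : 0 ≤ 9*q^2 + 9*q^3 - 3*q^4 - 2*q^5 + 9*q^6 + 11*q^7 + q^8 := by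
    nlinarith [pow_pos h0 2, pow_pos h0 3, pow_pos h0 4, pow_pos h0 5, pow_pos h0 6,
      pow_pos h0 7, pow_pos h0 8]
  nlinarith [key, hpoly, pow_pos h0 2]

private lemma num2 (q d H : ℝ) (h0 : 0 < q) (h1 : q < 1/10) (hd : d*q = 1) (hH : H*q^2 = 1) :
    0*(1+q^4) + ((d+H+1) - 0)*((1+q^4)*(1-10*q)) ≤ (1-q^4)*(H*(1-q^3)) := by
  rw [← sub_nonneg]
  have key : ((1-q^4)*(H*(1-q^3)) - (0*(1+q^4) + ((d+H+1) - 0)*((1+q^4)*(1-10*q)))) * q^2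
      = 9*q + 9*q^2 + 9*q^3 - 2*q^4 + 9*q^5 + 9*q^6 + 11*q^7 := by
    linear_combination (-q + 10*q^2 - q^5 + 10*q^6) * hd + (10*q - q^3 - 2*q^4 + 10*q^5 + q^7) * hH
  have hpoly : 0 ≤ 9*q + 9*q^2 + 9*q^3 - 2*q^4 + 9*q^5 + 9*q^6 + 11*q^7 := by
    nlinarith [pow_pos h0 1, pow_pos h0 2, pow_pos h0 3, pow_pos h0 4, pow_pos h0 5,
      pow_pos h0 6, pow_pos h0 7]
  nlinarith [key, hpoly, pow_pos h0 2]

private lemma numN4 (q : ℝ) (h0 : 0 < q) (h1 : q < 1/10) :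
    (1+q^4)*(1-10*q) ≤ (1-q^4)*(1-q^3) := by
  have h2 : 0 < 10 - q^2 - 2*q^3 := by nlinarith [pow_pos h0 2, pow_pos h0 3]
  nlinarith [mul_pos h0 h2, pow_pos h0 5, pow_pos h0 7]

/-- The blocking deviation: `i_e` sends `b` to the edge agent of `e` and to the
vertex agents of the vertices of `e`, and receives `a` from each of them. -/
def dev (ends : E → Fin 3 → V) (e : E) (a b : ℝ) : Agent V E → Agent V E → ℝ := fun p r =>
  if p = interA e ∧ (r = edgeA e ∨ ∃ s : Fin 3, r = vertA (ends e s)) then b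
  else if r = interA e ∧ (p = edgeA e ∨ ∃ s : Fin 3, p = vertA (ends e s)) then a else 0

section DevLemmas

variable {ends : E → Fin 3 → V} {e : E} {a b : ℝ}

lemma dev_ie : dev ends e a b (interA e) (edgeA e) = b := if_pos ⟨rfl, Or.inl rfl⟩

lemma dev_iv (s : Fin 3) : dev ends e a b (interA e) (vertA (ends e s)) = b :=
  if_pos ⟨rfl, Or.inr ⟨s, rfl⟩⟩

lemma dev_ei : dev ends e a b (edgeA e) (interA e) = a := by
  unfold dev
  rw [if_neg (by rintro ⟨h, -⟩; simp [edgeA, interA] at h), if_pos ⟨rfl, Or.inl rfl⟩]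

lemma dev_vi (s : Fin 3) : dev ends e a b (vertA (ends e s)) (interA e) = a := by
  unfold dev
  rw [if_neg (by rintro ⟨h, -⟩; simp [vertA, interA] at h), if_pos ⟨rfl, Or.inr ⟨s, rfl⟩⟩]

lemma dev_iv' {e' : E} (h : e' ≠ e) (u : V) : dev ends e a b (interA e') (vertA u) = 0 := by
  unfold dev
  rw [if_neg (by rintro ⟨h1, -⟩; exact h (by simpa [interA] using h1)),
    if_neg (by rintro ⟨h1, -⟩; simp [vertA, interA] at h1)]

lemma dev_vi' {e' : E} (h : e' ≠ e) (u : V) : dev ends e a b (vertA u) (interA e') = 0 := by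
  unfold dev
  rw [if_neg (by rintro ⟨h1, -⟩; simp [vertA, interA] at h1),
    if_neg (by rintro ⟨h1, -⟩; exact h (by simpa [interA] using h1))]

lemma dev_bounds (h0a : 0 ≤ a) (h1a : a ≤ 1) (h0b : 0 ≤ b) (h1b : b ≤ 1) :
    ∀ p r, 0 ≤ dev ends e a b p r ∧ dev ends e a b p r ≤ 1 := by
  intro p r; unfold dev
  split_ifs <;> exact ⟨by linarith, by linarith⟩

lemma dev_diag (p : Agent V E) : dev ends e a b p p = 0 := by
  unfold dev
  rw [if_neg, if_neg]
  · rintro ⟨rfl, h2 | ⟨s, h2⟩⟩ <;> simp [interA, edgeA, vertA] at h2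
  · rintro ⟨rfl, h2 | ⟨s, h2⟩⟩ <;> simp [interA, edgeA, vertA] at h2

lemma dev_outside {p r : Agent V E}
    (h : p ∉ {z : Agent V E | z = edgeA e ∨ z = interA e ∨ ∃ s : Fin 3, z = vertA (ends e s)} ∨
      r ∉ {z : Agent V E | z = edgeA e ∨ z = interA e ∨ ∃ s : Fin 3, z = vertA (ends e s)}) :
    dev ends e a b p r = 0 := by
  unfold dev
  rw [if_neg, if_neg]
  · rintro ⟨h1, h2⟩
    rcases h with h | h
    · rcases h2 with h2 | ⟨s, h2⟩
      · exact h (Or.inl h2)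
      · exact h (Or.inr (Or.inr ⟨s, h2⟩))
    · exact h (Or.inr (Or.inl h1))
  · rintro ⟨h1, h2⟩
    rcases h with h | h
    · exact h (Or.inr (Or.inl h1))
    · rcases h2 with h2 | ⟨s, h2⟩
      · exact h (Or.inl h2)
      · exact h (Or.inr (Or.inr ⟨s, h2⟩))

end DevLemmas

set_option maxHeartbeats 2000000 in
/-- In `D(G,≻,ε)`, if `x` is a symmetric core-stable data exchange, then
`f(e) = ((1-ε)/(1+ε))·max(f⁺(e), f⁻(e))` is a fractional matching of `G` and it is
`(1 - 10·ε^{1/4})`-stable: for every hyperedge `e` some vertex `v` of `e` has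
`Σ_{e' ∈ E(v), e' = e or e' ≻_v e} f(e') ≥ 1 - 10·ε^{1/4}`. -/
theorem core_stable_gives_stable_matching
    (V E : Type*) [Fintype V] [Fintype E]
    (ends : E → Fin 3 → V) (hends : ∀ e, Function.Injective (ends e))
    (hdeg : ∀ v, (Ev ends v).card ≤ 3)
    (rank : V → E → Fin 3)
    (hrank_inj : ∀ v, ∀ e ∈ Ev ends v, ∀ e' ∈ Ev ends v, rank v e = rank v e' → e = e')
    (hrank_seg : ∀ v, ∀ e ∈ Ev ends v, (rank v e : ℕ) < (Ev ends v).card)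
    (ε d H Γ : ℝ) (hε0 : 0 < ε) (hε1 : ε < 1/1000)
    (hd : d = ε ^ (-(1:ℝ)/4)) (hH : H = ε ^ (-(1:ℝ)/2)) (hΓ : Γ = 3*(d+H+1)/ε)
    (x : Agent V E → Agent V E → ℝ) (hx : IsExch x) (hsymm : Symm ends x)
    (hcs : CoreStable (util ε d H Γ ends rank) x)
    (f : E → ℝ) (hf : ∀ e, f e = (1 - ε) / (1 + ε) * max (fplus x e) (fminus x e)) :
    (∀ e, 0 ≤ f e ∧ f e ≤ 1) ∧
    (∀ v : V, (∑ e ∈ Ev ends v, f e) ≤ 1) ∧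
    (∀ e : E, ∃ t : Fin 3,
      (1 : ℝ) - 10 * ε ^ ((1:ℝ)/4) ≤
        ∑ e' ∈ (Ev ends (ends e t)).filter
          (fun e' => e' = e ∨ rank (ends e t) e' < rank (ends e t) e), f e') := by
  classical
  have hε1' : ε < 1 := lt_trans hε1 (by norm_num)
  have h1me : (0:ℝ) < 1 - ε := by linarith
  have h1pe : (0:ℝ) < 1 + ε := by linarith
  set q : ℝ := ε ^ ((1:ℝ)/4) with hqdef
  have hq0 : 0 < q := Real.rpow_pos_of_pos hε0 _
  have hq4 : q ^ 4 = ε := by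
    rw [hqdef, ← Real.rpow_natCast (ε ^ ((1:ℝ)/4)) 4, ← Real.rpow_mul hε0.le]
    norm_num
  have hεq : ε = q ^ 4 := hq4.symm
  have hdq : d * q = 1 := by
    rw [hqdef, hd, ← Real.rpow_add hε0]
    norm_num
  have hHq : H * q ^ 2 = 1 := by
    rw [hqdef, hH, ← Real.rpow_natCast (ε ^ ((1:ℝ)/4)) 2, ← Real.rpow_mul hε0.le,
      ← Real.rpow_add hε0]
    norm_num
  have hd0 : 0 < d := by rw [hd]; exact Real.rpow_pos_of_pos hε0 _
  have hH0 : 0 < H := by rw [hH]; exact Real.rpow_pos_of_pos hε0 _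
  have hΓ0 : 0 < Γ := by rw [hΓ]; positivity
  have hΓε : Γ * ε = 3*(d+H+1) := by rw [hΓ]; field_simp
  have hfp0 : ∀ e', 0 ≤ fplus x e' := fun e' => (hx.1 _ _).1
  have hfp1 : ∀ e', fplus x e' ≤ 1 := fun e' => (hx.1 _ _).2
  have hfm0 : ∀ e', 0 ≤ fminus x e' := fun e' => (hx.1 _ _).1
  have hfm1 : ∀ e', fminus x e' ≤ 1 := fun e' => (hx.1 _ _).2
  have hwle : ∀ v e', weight d H rank v e' ≤ d + H + 1 := by
    intro v e'; unfold weight; split_ifs <;> linarith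
  have hw0 : ∀ v e', 0 ≤ weight d H rank v e' := by
    intro v e'; unfold weight; split_ifs <;> linarith
  have hzero : ∀ α : Agent V E, util ε d H Γ ends rank (fun _ _ => (0:ℝ)) α = 0 := by
    intro α
    rcases α with e' | e' | v
    · simp [util, uEdge]
    · simp [util, uInter]
    · simp [util, uVert]
  have hIR : ∀ α : Agent V E, 0 ≤ util ε d H Γ ends rank x α := by
    intro α; by_contra hneg; push_neg at hneg
    refine hcs ⟨{α}, fun _ _ => 0, ⟨α, rfl⟩,
      ⟨⟨fun a b => ⟨le_refl 0, by norm_num⟩, fun a => rfl⟩, fun a b _ => rfl⟩, ?_⟩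
    intro z hz
    rw [Set.mem_singleton_iff] at hz; subst hz
    rw [hzero]; exact hneg
  have hP : ∀ e', 0 ≤ fminus x e' - (1-ε) * fplus x e' := by
    intro e'; have h := hIR (Sum.inl e')
    simpa [util, uEdge, fminus, fplus, edgeA] using h
  have hQ : ∀ e', 0 ≤ fplus x e' - (1-ε) * fminus x e' := by
    intro e'
    have h := hIR (Sum.inr (Sum.inl e'))
    simp only [util, uInter] at h
    rw [(hsymm e').2 0, (hsymm e').2 1, (hsymm e').2 2, (hsymm e').1 0, (hsymm e').1 1,
      (hsymm e').1 2] at h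
    simp only [min_self, max_self] at h
    exact h
  have hEv : ∀ (v : V) (e' : E), e' ∈ Ev ends v ↔ ∃ t : Fin 3, ends e' t = v := by
    intro v e'; simp [Ev]
  have hfmx : ∀ (v : V), ∀ e' ∈ Ev ends v, x (interA e') (vertA v) = fminus x e' := by
    intro v e' he'
    obtain ⟨t, ht⟩ := (hEv v e').1 he'
    rw [← ht]; exact (hsymm e').1 t
  have hfpx : ∀ (v : V), ∀ e' ∈ Ev ends v, x (vertA v) (interA e') = fplus x e' := by
    intro v e' he'
    obtain ⟨t, ht⟩ := (hEv v e').1 he'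
    rw [← ht]; exact (hsymm e').2 t
  have hbudget : ∀ v : V, (∑ e' ∈ Ev ends v, fplus x e') ≤ 1 + ε := by
    intro v
    have h := hIR (Sum.inr (Sum.inr v))
    simp only [util, uVert] at h
    have h1 : ∑ e' ∈ Ev ends v, weight d H rank v e' * x (interA e') (vertA v)
        = ∑ e' ∈ Ev ends v, weight d H rank v e' * fminus x e' :=
      Finset.sum_congr rfl (fun e' he' => by rw [hfmx v e' he'])
    have h2 : ∑ e' ∈ Ev ends v, x (vertA v) (interA e')
        = ∑ e' ∈ Ev ends v, fplus x e' :=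
      Finset.sum_congr rfl (fun e' he' => hfpx v e' he')
    rw [h1, h2] at h
    have hub : ∑ e' ∈ Ev ends v, weight d H rank v e' * fminus x e' ≤ 3*(d+H+1) := by
      calc ∑ e' ∈ Ev ends v, weight d H rank v e' * fminus x e'
          ≤ ∑ _e' ∈ Ev ends v, (d+H+1) := Finset.sum_le_sum (fun e' _ => by
            have h3 := mul_le_mul (hwle v e') (hfm1 e') (hfm0 e') (by linarith)
            simpa using h3)
        _ = ((Ev ends v).card : ℝ) * (d+H+1) := by rw [Finset.sum_const, nsmul_eq_mul]
        _ ≤ 3*(d+H+1) := by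
            have h4 : ((Ev ends v).card : ℝ) ≤ 3 := by exact_mod_cast hdeg v
            nlinarith
    by_contra hc; push_neg at hc
    have hmax : Γ * ε < Γ * max ((∑ e' ∈ Ev ends v, fplus x e') - 1) 0 := by
      apply mul_lt_mul_of_pos_left _ hΓ0
      exact lt_of_lt_of_le (by linarith) (le_max_left _ _)
    linarith
  have hkeym : ∀ e', (1-ε) * fminus x e' ≤ (1+ε) * f e' := by
    intro e'
    have hrw : (1+ε) * f e' = (1-ε) * max (fplus x e') (fminus x e') := by
      rw [hf e']; field_simp
    rw [hrw]
    exact mul_le_mul_of_nonneg_left (le_max_right _ _) h1me.le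
  have hkeyp : ∀ e', (1+ε) * f e' ≤ fplus x e' := by
    intro e'
    have hrw : (1+ε) * f e' = (1-ε) * max (fplus x e') (fminus x e') := by
      rw [hf e']; field_simp
    rw [hrw]
    rcases max_cases (fplus x e') (fminus x e') with ⟨hm, _⟩ | ⟨hm, _⟩ <;> rw [hm]
    · nlinarith [hfp0 e']
    · linarith [hQ e']
  have hf0 : ∀ e', 0 ≤ f e' := by
    intro e'; rw [hf e']
    exact mul_nonneg (div_nonneg h1me.le h1pe.le)
      (le_trans (hfp0 e') (le_max_left _ _))
  have hf1 : ∀ e', f e' ≤ 1 := by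
    intro e'; rw [hf e']
    have hM : max (fplus x e') (fminus x e') ≤ 1 := max_le (hfp1 e') (hfm1 e')
    have hM0 : 0 ≤ max (fplus x e') (fminus x e') := le_trans (hfp0 e') (le_max_left _ _)
    have hc : (1-ε)/(1+ε) ≤ 1 := by rw [div_le_one h1pe]; linarith
    nlinarith [div_nonneg h1me.le h1pe.le]
  refine ⟨fun e' => ⟨hf0 e', hf1 e'⟩, ?_, ?_⟩
  · intro v
    have h1 : (1+ε) * (∑ e' ∈ Ev ends v, f e') ≤ (1+ε) * 1 := by
      rw [Finset.mul_sum]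
      calc ∑ e' ∈ Ev ends v, (1+ε) * f e'
          ≤ ∑ e' ∈ Ev ends v, fplus x e' := Finset.sum_le_sum (fun e' _ => hkeyp e')
        _ ≤ 1 + ε := hbudget v
        _ = (1+ε) * 1 := by ring
    exact le_of_mul_le_mul_left h1 h1pe
  · intro e
    by_cases h10 : 1 - 10 * q ≤ 0
    · exact ⟨0, le_trans h10 (Finset.sum_nonneg (fun e' _ => hf0 e'))⟩
    push_neg at h10
    have hq10 : q < 1/10 := by linarith
    by_contra hcon
    push_neg at hcon
    have h1mq : (0:ℝ) < 1 - q^4 := by rw [← hεq]; exact h1me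
    -- the vertex-agent bound
    have hvert : ∀ t : Fin 3,
        uVert d H Γ ends rank x (ends e t) < weight d H rank (ends e t) e * (1 - q^3) := by
      intro t
      have hev : e ∈ Ev ends (ends e t) := (hEv (ends e t) e).2 ⟨t, rfl⟩
      set S := ∑ e' ∈ (Ev ends (ends e t)).filter
          (fun e' => e' = e ∨ rank (ends e t) e' < rank (ends e t) e), fminus x e' with hSd
      set T := ∑ e' ∈ (Ev ends (ends e t)).filter
          (fun e' => ¬(e' = e ∨ rank (ends e t) e' < rank (ends e t) e)), fminus x e' with hTd
      have hS0 : 0 ≤ S := Finset.sum_nonneg (fun e' _ => hfm0 e')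
      have hT0 : 0 ≤ T := Finset.sum_nonneg (fun e' _ => hfm0 e')
      have hSstrict : (1-ε) * S < (1+ε) * (1 - 10*q) := by
        have h1 : (1-ε) * S ≤ (1+ε) * ∑ e' ∈ (Ev ends (ends e t)).filter
            (fun e' => e' = e ∨ rank (ends e t) e' < rank (ends e t) e), f e' := by
          rw [hSd, Finset.mul_sum, Finset.mul_sum]
          exact Finset.sum_le_sum (fun e' _ => hkeym e')
        have h2 := hcon t
        nlinarith [h1, h2, h1pe]
      have hST : (1-ε) * (S + T) ≤ 1 + ε := by
        have h1 : (1-ε) * (S + T) = ∑ e' ∈ Ev ends (ends e t), (1-ε) * fminus x e' := by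
          rw [hSd, hTd, mul_add, Finset.mul_sum, Finset.mul_sum,
            Finset.sum_filter_add_sum_filter_not]
        rw [h1]
        calc ∑ e' ∈ Ev ends (ends e t), (1-ε) * fminus x e'
            ≤ ∑ e' ∈ Ev ends (ends e t), fplus x e' :=
              Finset.sum_le_sum (fun e' _ => by linarith [hQ e'])
          _ ≤ 1 + ε := hbudget (ends e t)
      have hpay : uVert d H Γ ends rank x (ends e t) ≤
          ∑ e' ∈ Ev ends (ends e t), weight d H rank (ends e t) e' * fminus x e' := by
        unfold uVert
        have h1 : ∑ e' ∈ Ev ends (ends e t),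
            weight d H rank (ends e t) e' * x (interA e') (vertA (ends e t))
            = ∑ e' ∈ Ev ends (ends e t), weight d H rank (ends e t) e' * fminus x e' :=
          Finset.sum_congr rfl (fun e' he' => by rw [hfmx (ends e t) e' he'])
        rw [h1]
        have h2 : 0 ≤ Γ * max ((∑ e' ∈ Ev ends (ends e t), x (vertA (ends e t)) (interA e')) - 1) 0 :=
          mul_nonneg hΓ0.le (le_max_right _ _)
        linarith
      have hsplit : ∑ e' ∈ Ev ends (ends e t), weight d H rank (ends e t) e' * fminus x e'
          = (∑ e' ∈ (Ev ends (ends e t)).filter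
              (fun e' => e' = e ∨ rank (ends e t) e' < rank (ends e t) e),
                weight d H rank (ends e t) e' * fminus x e')
            + ∑ e' ∈ (Ev ends (ends e t)).filter
              (fun e' => ¬(e' = e ∨ rank (ends e t) e' < rank (ends e t) e)),
                weight d H rank (ends e t) e' * fminus x e' :=
        (Finset.sum_filter_add_sum_filter_not _ _ _).symm
      have hSb : ∑ e' ∈ (Ev ends (ends e t)).filter
          (fun e' => e' = e ∨ rank (ends e t) e' < rank (ends e t) e),
            weight d H rank (ends e t) e' * fminus x e' ≤ (d+H+1) * S := by
        rw [hSd, Finset.mul_sum]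
        exact Finset.sum_le_sum
          (fun e' _ => mul_le_mul_of_nonneg_right (hwle (ends e t) e') (hfm0 e'))
      have hworse : ∀ e' ∈ (Ev ends (ends e t)).filter
          (fun e' => ¬(e' = e ∨ rank (ends e t) e' < rank (ends e t) e)),
          ((rank (ends e t) e : ℕ) < (rank (ends e t) e' : ℕ)) := by
        intro e' he'
        rw [Finset.mem_filter] at he'
        obtain ⟨hmem, hnp⟩ := he'
        push_neg at hnp
        obtain ⟨hne, hnlt⟩ := hnp
        have hle : rank (ends e t) e ≤ rank (ends e t) e' := hnlt
        rcases hle.lt_or_eq with hlt | heq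
        · exact hlt
        · exact absurd (hrank_inj (ends e t) e' hmem e hev heq.symm) hne
      have assemble : ∀ w2 : ℝ, 0 ≤ w2 → w2 < d+H+1 →
          ((∑ e' ∈ (Ev ends (ends e t)).filter
              (fun e' => ¬(e' = e ∨ rank (ends e t) e' < rank (ends e t) e)),
                weight d H rank (ends e t) e' * fminus x e') ≤ w2 * T) →
          (w2*(1+ε) + ((d+H+1) - w2)*((1+ε)*(1-10*q))
            ≤ (1-ε)*(weight d H rank (ends e t) e * (1-q^3))) →
          uVert d H Γ ends rank x (ends e t) < weight d H rank (ends e t) e * (1 - q^3) := by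
        intro w2 hw2 hw2lt hTb hnum
        have c1 : (1-ε)*((d+H+1)*S + w2*T)
            = w2*((1-ε)*(S+T)) + ((d+H+1)-w2)*((1-ε)*S) := by ring
        have c2 : w2*((1-ε)*(S+T)) ≤ w2*(1+ε) := mul_le_mul_of_nonneg_left hST hw2
        have c3 : ((d+H+1)-w2)*((1-ε)*S) < ((d+H+1)-w2)*((1+ε)*(1-10*q)) :=
          mul_lt_mul_of_pos_left hSstrict (by linarith)
        have c5 : (1-ε)*((d+H+1)*S + w2*T)
            < (1-ε)*(weight d H rank (ends e t) e * (1-q^3)) := by linarith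
        have c6 : (d+H+1)*S + w2*T < weight d H rank (ends e t) e * (1-q^3) :=
          lt_of_mul_lt_mul_left c5 h1me.le
        calc uVert d H Γ ends rank x (ends e t)
            ≤ ∑ e' ∈ Ev ends (ends e t), weight d H rank (ends e t) e' * fminus x e' := hpay
          _ ≤ (d+H+1)*S + w2*T := by rw [hsplit]; linarith
          _ < _ := c6
      have hcase : (rank (ends e t) e : ℕ) = 0 ∨ (rank (ends e t) e : ℕ) = 1
          ∨ (rank (ends e t) e : ℕ) = 2 := by
        have := (rank (ends e t) e).isLt; omega
      rcases hcase with hc | hc | hc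
      · have hr : rank (ends e t) e = 0 := by
          apply Fin.ext; simpa using hc
        have hwv : weight d H rank (ends e t) e = d+H+1 := by simp [weight, hr]
        refine assemble (d+H) (by linarith) (by linarith) ?_ ?_
        · rw [hTd, Finset.mul_sum]
          apply Finset.sum_le_sum; intro e' he'
          have hval := hworse e' he'
          apply mul_le_mul_of_nonneg_right _ (hfm0 e')
          unfold weight
          split_ifs with h1 h2
          · exfalso
            have : (rank (ends e t) e' : ℕ) = 0 := by rw [h1]; rfl
            omega
          · exact le_rfl
          · linarith
        · rw [hwv, hεq]
          exact num0 q d H hq0 hq10 hdq hHq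
      · have hr : rank (ends e t) e = 1 := by
          apply Fin.ext; simpa using hc
        have hwv : weight d H rank (ends e t) e = d+H := by
          simp [weight, hr]
        refine assemble H (by linarith) (by linarith) ?_ ?_
        · rw [hTd, Finset.mul_sum]
          apply Finset.sum_le_sum; intro e' he'
          have hval := hworse e' he'
          apply mul_le_mul_of_nonneg_right _ (hfm0 e')
          unfold weight
          split_ifs with h1 h2
          · exfalso
            have : (rank (ends e t) e' : ℕ) = 0 := by rw [h1]; rfl
            omega
          · exfalso
            have : (rank (ends e t) e' : ℕ) = 1 := by rw [h2]; rfl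
            omega
          · exact le_rfl
        · rw [hwv, hεq]
          exact num1 q d H hq0 hq10 hdq hHq
      · have hr : rank (ends e t) e = 2 := by
          apply Fin.ext; simpa using hc
        have hwv : weight d H rank (ends e t) e = H := by
          simp [weight, hr]
        refine assemble 0 le_rfl (by linarith) ?_ ?_
        · rw [hTd, Finset.mul_sum]
          apply Finset.sum_le_sum; intro e' he'
          exfalso
          have hval := hworse e' he'
          have := (rank (ends e t) e').isLt
          omega
        · rw [hwv, hεq]
          exact num2 q d H hq0 hq10 hdq hHq
    -- quantities of the blocking exchange
    have hP0 : 0 ≤ fminus x e - (1-ε) * fplus x e := hP e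
    have hQ0 : 0 ≤ fplus x e - (1-ε) * fminus x e := hQ e
    have hb0 : (0:ℝ) < 1 - q^3 := by nlinarith [pow_pos hq0 3]
    have hb1 : (1:ℝ) - q^3 ≤ 1 := by nlinarith [pow_pos hq0 3]
    have hfe : f e < 1 - 10*q := by
      refine lt_of_le_of_lt ?_ (hcon 0)
      apply Finset.single_le_sum (fun e' _ => hf0 e')
      rw [Finset.mem_filter]
      exact ⟨(hEv _ e).2 ⟨0, rfl⟩, Or.inl rfl⟩
    have hfmb : fminus x e < 1 - q^3 := by
      have h1 : (1-ε) * fminus x e ≤ (1+ε) * f e := hkeym e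
      have h2 : (1+ε) * f e < (1+ε) * (1 - 10*q) := mul_lt_mul_of_pos_left hfe h1pe
      have h3 : (1+q^4)*(1-10*q) ≤ (1-q^4)*(1-q^3) := numN4 q hq0 hq10
      rw [hεq] at h1 h2
      have h4 : (1-q^4) * fminus x e < (1-q^4) * (1-q^3) := by linarith
      exact lt_of_mul_lt_mul_left h4 h1mq.le
    have hQ2 : fplus x e - (1-ε) * fminus x e ≤ 2*ε := by
      nlinarith [mul_nonneg h1me.le hP0, hfp1 e, hfp0 e, hε0.le,
        mul_nonneg (by nlinarith : (0:ℝ) ≤ 2*ε - ε^2) (by linarith [hfp1 e] : 0 ≤ 1 - fplus x e)]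
    set L : ℝ := (fplus x e - (1-ε) * fminus x e) + (1-ε)*(1-q^3) with hLd
    have hL1 : L < 1 := by
      rw [hLd, hεq]
      rw [hεq] at hQ2
      nlinarith [pow_pos hq0 3, pow_pos hq0 4, pow_pos hq0 7, hq10, hq0]
    have hL0 : 0 ≤ L := by
      rw [hLd]
      have := mul_nonneg h1me.le hb0.le
      linarith
    have hLU : (1-ε) * L < (1-q^3) - (fminus x e - (1-ε) * fplus x e) := by
      have hid : (fminus x e - (1-ε) * fplus x e) + (1-ε)*(fplus x e - (1-ε) * fminus x e)
          = (2*ε - ε^2) * fminus x e := by ring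
      have h2e : (0:ℝ) < 2*ε - ε^2 := by nlinarith
      rw [hLd]
      nlinarith [mul_lt_mul_of_pos_left hfmb h2e]
    have hLU' : L < ((1-q^3) - (fminus x e - (1-ε) * fplus x e))/(1-ε) := by
      rw [lt_div_iff₀ h1me]
      nlinarith [hLU]
    set a : ℝ := min ((L+1)/2)
      ((L + ((1-q^3) - (fminus x e - (1-ε) * fplus x e))/(1-ε))/2) with had
    have haL : L < a := lt_min (by linarith) (by linarith)
    have ha1 : a ≤ 1 := le_trans (min_le_left _ _) (by linarith)
    have ha0 : 0 ≤ a := le_of_lt (lt_of_le_of_lt hL0 haL)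
    have haU : a < ((1-q^3) - (fminus x e - (1-ε) * fplus x e))/(1-ε) :=
      lt_of_le_of_lt (min_le_right _ _) (by linarith)
    have haU' : (1-ε) * a < (1-q^3) - (fminus x e - (1-ε) * fplus x e) := by
      have h5 := (lt_div_iff₀ h1me).mp haU
      nlinarith [h5]
    -- the blocking coalition
    refine hcs ⟨{z : Agent V E | z = edgeA e ∨ z = interA e ∨ ∃ s : Fin 3, z = vertA (ends e s)},
      dev ends e a (1-q^3), ⟨edgeA e, Or.inl rfl⟩,
      ⟨⟨dev_bounds ha0 ha1 hb0.le hb1, dev_diag⟩, fun p r h => dev_outside h⟩, ?_⟩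
    rintro z (rfl | rfl | ⟨s, rfl⟩)
    · show uEdge ε x e < uEdge ε (dev ends e a (1-q^3)) e
      unfold uEdge
      rw [dev_ie, dev_ei]
      have hfin : fminus x e - (1-ε) * fplus x e < (1-q^3) - (1-ε)*a := by linarith [haU']
      exact hfin
    · show uInter ε ends x e < uInter ε ends (dev ends e a (1-q^3)) e
      unfold uInter
      rw [dev_ei, dev_vi 0, dev_vi 1, dev_vi 2, dev_ie, dev_iv 0, dev_iv 1, dev_iv 2,
        (hsymm e).2 0, (hsymm e).2 1, (hsymm e).2 2, (hsymm e).1 0, (hsymm e).1 1, (hsymm e).1 2]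
      simp only [min_self, max_self]
      have hfin : fplus x e - (1-ε) * fminus x e < a - (1-ε)*(1-q^3) := by
        rw [hLd] at haL; linarith
      exact hfin
    · show uVert d H Γ ends rank x (ends e s)
        < uVert d H Γ ends rank (dev ends e a (1-q^3)) (ends e s)
      have hevs : e ∈ Ev ends (ends e s) := (hEv (ends e s) e).2 ⟨s, rfl⟩
      have hUVy : uVert d H Γ ends rank (dev ends e a (1-q^3)) (ends e s)
          = weight d H rank (ends e s) e * (1-q^3) := by
        unfold uVert
        have h1 : ∑ e' ∈ Ev ends (ends e s),
            weight d H rank (ends e s) e' * dev ends e a (1-q^3) (interA e') (vertA (ends e s))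
            = weight d H rank (ends e s) e * dev ends e a (1-q^3) (interA e) (vertA (ends e s)) :=
          Finset.sum_eq_single_of_mem e hevs (fun e' _ hne => by rw [dev_iv' hne, mul_zero])
        have h2 : ∑ e' ∈ Ev ends (ends e s), dev ends e a (1-q^3) (vertA (ends e s)) (interA e')
            = dev ends e a (1-q^3) (vertA (ends e s)) (interA e) :=
          Finset.sum_eq_single_of_mem e hevs (fun e' _ hne => dev_vi' hne _)
        rw [h1, h2, dev_iv s, dev_vi s, max_eq_right (by linarith : a - 1 ≤ (0:ℝ)),
          mul_zero, sub_zero]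
      rw [hUVy]
      exact hvert s

end
end DataExchangeHGM
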